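/- Let c : [0,1] → ℝ satisfy c ≥ 1 on [0,1]. Let ρ : [0,T] × ℝ → [0,1] be such that for each t the function x ↦ c(ρ(t,x)) is integrable on [-1,1], and suppose ξ : [0,T] → (-1,1) satisfies the balance ∫_{-1}^{ξ(t)} c(ρ(t,x)) dx = ∫_{ξ(t)}^1 c(ρ(t,x)) dx for all t. Then for all s, t ∈ [0,T], writing ξ̲ = min(ξ(s),ξ(t)) and ξ̄ = max(ξ(s),ξ(t)), one has 2|ξ(t) − ξ(s)| ≤ |∫_{-1}^{ξ̲} (c(ρ(t,x)) − c(ρ(s,x))) dx − ∫_{ξ̄}^{1} (c(ρ(t,x)) − c(ρ(s,x))) dx|. -/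
import Mathlib

open MeasureTheory intervalIntegral

lemma aux_hughes (f g : ℝ → ℝ) (a b : ℝ)
    (ha : -1 ≤ a) (hab : a ≤ b) (hb : b ≤ 1)
    (hf : IntervalIntegrable f volume (-1) 1)
    (hg : IntervalIntegrable g volume (-1) 1)
    (hf1 : ∀ x, 1 ≤ f x) (hg1 : ∀ x, 1 ≤ g x)
    (hbf : (∫ x in (-1:ℝ)..b, f x) = ∫ x in b..(1:ℝ), f x)
    (hbg : (∫ x in (-1:ℝ)..a, g x) = ∫ x in a..(1:ℝ), g x) :
    2 * (b - a) ≤ |(∫ x in (-1:ℝ)..a, (f x - g x)) - ∫ x in b..(1:ℝ), (f x - g x)| := by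
  have mem : ∀ x : ℝ, -1 ≤ x → x ≤ 1 → x ∈ Set.uIcc (-1:ℝ) 1 := fun x h1 h2 => by
    rw [Set.uIcc_of_le (by norm_num : (-1:ℝ) ≤ 1)]; exact ⟨h1, h2⟩
  have sub1 : Set.uIcc (-1:ℝ) a ⊆ Set.uIcc (-1:ℝ) 1 :=
    Set.uIcc_subset_uIcc (mem _ le_rfl (by norm_num)) (mem _ ha (hab.trans hb))
  have sub2 : Set.uIcc a b ⊆ Set.uIcc (-1:ℝ) 1 :=
    Set.uIcc_subset_uIcc (mem _ ha (hab.trans hb)) (mem _ (ha.trans hab) hb)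
  have sub3 : Set.uIcc b (1:ℝ) ⊆ Set.uIcc (-1:ℝ) 1 :=
    Set.uIcc_subset_uIcc (mem _ (ha.trans hab) hb) (mem _ (by norm_num) le_rfl)
  have hf1' := hf.mono_set sub1
  have hf2 := hf.mono_set sub2
  have hf3 := hf.mono_set sub3
  have hg1' := hg.mono_set sub1
  have hg2 := hg.mono_set sub2
  have hg3 := hg.mono_set sub3
  have hadd_f : (∫ x in (-1:ℝ)..a, f x) + ∫ x in a..b, f x = ∫ x in (-1:ℝ)..b, f x :=
    integral_add_adjacent_intervals hf1' hf2
  have hadd_g : (∫ x in a..b, g x) + ∫ x in b..(1:ℝ), g x = ∫ x in a..(1:ℝ), g x :=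
    integral_add_adjacent_intervals hg2 hg3
  have e1 : (∫ x in (-1:ℝ)..a, (f x - g x)) = (∫ x in (-1:ℝ)..a, f x) - ∫ x in (-1:ℝ)..a, g x :=
    integral_sub hf1' hg1'
  have e2 : (∫ x in b..(1:ℝ), (f x - g x)) = (∫ x in b..(1:ℝ), f x) - ∫ x in b..(1:ℝ), g x :=
    integral_sub hf3 hg3
  have key : (∫ x in (-1:ℝ)..a, (f x - g x)) - ∫ x in b..(1:ℝ), (f x - g x)
      = -(∫ x in a..b, f x) - ∫ x in a..b, g x := by
    rw [e1, e2]; linarith [hadd_f, hadd_g, hbf, hbg]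
  have lbf : b - a ≤ ∫ x in a..b, f x := by
    calc b - a = ∫ _ in a..b, (1:ℝ) := by simp
    _ ≤ ∫ x in a..b, f x :=
      integral_mono_on hab intervalIntegrable_const hf2 (fun x _ => hf1 x)
  have lbg : b - a ≤ ∫ x in a..b, g x := by
    calc b - a = ∫ _ in a..b, (1:ℝ) := by simp
    _ ≤ ∫ x in a..b, g x :=
      integral_mono_on hab intervalIntegrable_const hg2 (fun x _ => hg1 x)
  rw [key]
  calc 2 * (b - a) ≤ (∫ x in a..b, g x) + ∫ x in a..b, f x := by linarith
  _ = -((-(∫ x in a..b, f x)) - ∫ x in a..b, g x) := by ring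
  _ ≤ |(-(∫ x in a..b, f x)) - ∫ x in a..b, g x| := neg_le_abs _

/-- Key Lipschitz-type estimate for the Hughes turning curve. -/
theorem stmt2 (T : ℝ) (hT : 0 < T) (c : ℝ → ℝ)
    (hc1 : ∀ p ∈ Set.Icc (0:ℝ) 1, 1 ≤ c p)
    (ρ : ℝ → ℝ → ℝ) (hρ : ∀ t x, ρ t x ∈ Set.Icc (0:ℝ) 1)
    (hint : ∀ t, IntervalIntegrable (fun x => c (ρ t x)) MeasureTheory.volume (-1) 1)
    (ξ : ℝ → ℝ) (hξ : ∀ t ∈ Set.Icc 0 T, ξ t ∈ Set.Ioo (-1:ℝ) 1)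
    (hbal : ∀ t ∈ Set.Icc 0 T,
      (∫ x in (-1:ℝ)..(ξ t), c (ρ t x)) = ∫ x in (ξ t)..(1:ℝ), c (ρ t x)) :
    ∀ s ∈ Set.Icc 0 T, ∀ t ∈ Set.Icc 0 T,
      2 * |ξ t - ξ s| ≤
        |(∫ x in (-1:ℝ)..(min (ξ s) (ξ t)), (c (ρ t x) - c (ρ s x))) -
          ∫ x in (max (ξ s) (ξ t))..(1:ℝ), (c (ρ t x) - c (ρ s x))| := by
  intro s hs t ht
  have hxs := hξ s hs
  have hxt := hξ t ht
  rcases le_total (ξ s) (ξ t) with h | h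
  · rw [min_eq_left h, max_eq_right h, abs_of_nonneg (by linarith)]
    exact aux_hughes _ _ _ _ hxs.1.le h hxt.2.le (hint t) (hint s)
      (fun x => hc1 _ (hρ t x)) (fun x => hc1 _ (hρ s x)) (hbal t ht) (hbal s hs)
  · rw [min_eq_right h, max_eq_left h, abs_of_nonpos (by linarith)]
    have := aux_hughes _ _ _ _ hxt.1.le h hxs.2.le (hint s) (hint t)
      (fun x => hc1 _ (hρ s x)) (fun x => hc1 _ (hρ t x)) (hbal s hs) (hbal t ht)
    have hneg : ∀ (u v : ℝ),
        (∫ x in u..v, (c (ρ t x) - c (ρ s x))) = -∫ x in u..v, (c (ρ s x) - c (ρ t x)) := by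
      intro u v; rw [← intervalIntegral.integral_neg]; congr 1 with x; ring
    rw [hneg, hneg]
    calc 2 * -(ξ t - ξ s) = 2 * (ξ s - ξ t) := by ring
    _ ≤ |(∫ x in (-1:ℝ)..(ξ t), (c (ρ s x) - c (ρ t x))) -
          ∫ x in (ξ s)..(1:ℝ), (c (ρ s x) - c (ρ t x))| := this
    _ = |(-∫ x in (-1:ℝ)..(ξ t), (c (ρ s x) - c (ρ t x))) -
          -∫ x in (ξ s)..(1:ℝ), (c (ρ s x) - c (ρ t x))| := by
        rw [← abs_neg]; ring_nf
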